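/- For radii: with ρ(z) = (1−|z|²)/2 and d(z₁,z₂) = |z₁−z₂|/(√ρ(z₁)+√ρ(z₂)+√|z₁−z₂|), there exists a constant C ≥ 1 such that for all r > 0 and all z in the closed unit ball, the Euclidean ball of radius r(r+√ρ(z)) around z intersected with the closed unit ball is contained in the d-ball B_r^d(z) = {z' : d(z,z') < r}, and B_r^d(z) is contained in the Euclidean ball of radius C·r(r+√ρ(z)) around z intersected with the closed unit ball. -/
import Mathlib


/-- The weight `ρ(z) = (1 - |z|²)/2`. -/
noncomputable def rho {N : ℕ} (z : EuclideanSpace ℝ (Fin N)) : ℝ := (1 - ‖z‖ ^ 2) / 2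

/-- The semimetric `d(z₁,z₂) = |z₁ - z₂| / (√ρ(z₁) + √ρ(z₂) + √|z₁-z₂|)`. -/
noncomputable def hcdist {N : ℕ} (z₁ z₂ : EuclideanSpace ℝ (Fin N)) : ℝ :=
  ‖z₁ - z₂‖ / (Real.sqrt (rho z₁) + Real.sqrt (rho z₂) + Real.sqrt ‖z₁ - z₂‖)

/-- The intrinsic ball `B_r^d(z)`: points of the closed unit ball at `d`-distance `< r` from `z`. -/
noncomputable def dBall {N : ℕ} (z : EuclideanSpace ℝ (Fin N)) (r : ℝ) :
    Set (EuclideanSpace ℝ (Fin N)) :=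
  {z' ∈ Metric.closedBall (0 : EuclideanSpace ℝ (Fin N)) 1 | hcdist z z' < r}

theorem dBall_comparison (N : ℕ) :
    ∃ C : ℝ, 1 ≤ C ∧ ∀ r : ℝ, 0 < r →
      ∀ z ∈ Metric.closedBall (0 : EuclideanSpace ℝ (Fin N)) 1,
        (Metric.ball z (r * (r + Real.sqrt (rho z))) ∩
            Metric.closedBall (0 : EuclideanSpace ℝ (Fin N)) 1 ⊆ dBall z r) ∧
        (dBall z r ⊆ Metric.ball z (C * r * (r + Real.sqrt (rho z))) ∩
            Metric.closedBall (0 : EuclideanSpace ℝ (Fin N)) 1) := by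
  refine ⟨4, by norm_num, fun r hr z hz => ?_⟩
  have hz1 : ‖z‖ ≤ 1 := by simpa using hz
  have hρz : 0 ≤ rho z := by
    unfold rho; nlinarith [norm_nonneg z]
  have ha0 : 0 ≤ Real.sqrt (rho z) := Real.sqrt_nonneg _
  have ha2 : Real.sqrt (rho z) ^ 2 = rho z := Real.sq_sqrt hρz
  set a := Real.sqrt (rho z) with ha
  constructor
  · rintro z' ⟨hball, hz'⟩
    refine ⟨hz', ?_⟩
    have hz'1 : ‖z'‖ ≤ 1 := by simpa using hz'
    have hρz' : 0 ≤ rho z' := by unfold rho; nlinarith [norm_nonneg z']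
    have hb0 : 0 ≤ Real.sqrt (rho z') := Real.sqrt_nonneg _
    set b := Real.sqrt (rho z') with hb
    have ht0 : (0:ℝ) ≤ ‖z - z'‖ := norm_nonneg _
    have htlt : ‖z - z'‖ < r * (r + a) := by
      have := Metric.mem_ball.mp hball
      rwa [dist_eq_norm, norm_sub_rev] at this
    unfold hcdist
    rw [← ha, ← hb]
    rcases eq_or_lt_of_le ht0 with h0 | hpos
    · rw [← h0]; simpa using hr
    · set s := Real.sqrt ‖z - z'‖ with hs
      have hs0 : 0 < s := Real.sqrt_pos.mpr hpos
      have hs2 : s ^ 2 = ‖z - z'‖ := Real.sq_sqrt ht0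
      rw [div_lt_iff₀ (by positivity)]
      nlinarith [mul_pos hr hs0, mul_nonneg hr.le ha0, mul_nonneg hr.le hb0,
        mul_nonneg ha0 hs0.le, sq_nonneg (r - s), mul_pos hr hr]
  · rintro z' ⟨hz', hd⟩
    have hz'1 : ‖z'‖ ≤ 1 := by simpa using hz'
    have hρz' : 0 ≤ rho z' := by unfold rho; nlinarith [norm_nonneg z']
    have hb0 : 0 ≤ Real.sqrt (rho z') := Real.sqrt_nonneg _
    have hb2 : Real.sqrt (rho z') ^ 2 = rho z' := Real.sq_sqrt hρz'
    set b := Real.sqrt (rho z') with hb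
    refine ⟨?_, hz'⟩
    rw [Metric.mem_ball, dist_eq_norm, norm_sub_rev]
    have ht0 : (0:ℝ) ≤ ‖z - z'‖ := norm_nonneg _
    rcases eq_or_lt_of_le ht0 with h0 | hpos
    · rw [← h0]; positivity
    · set s := Real.sqrt ‖z - z'‖ with hs
      have hs0 : 0 < s := Real.sqrt_pos.mpr hpos
      have hs2 : s ^ 2 = ‖z - z'‖ := Real.sq_sqrt ht0
      have hkey : ‖z - z'‖ < r * (a + b + s) := by
        unfold hcdist at hd
        rw [← ha, ← hb, ← hs] at hd
        have hden : 0 < a + b + s := by positivity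
        calc ‖z - z'‖ = (‖z - z'‖ / (a + b + s)) * (a + b + s) := by field_simp
        _ < r * (a + b + s) := by
            exact mul_lt_mul_of_pos_right hd hden
      -- rho z' ≤ rho z + ‖z - z'‖
      have hrho : rho z' ≤ rho z + ‖z - z'‖ := by
        have h1 : |‖z‖ - ‖z'‖| ≤ ‖z - z'‖ := abs_norm_sub_norm_le z z'
        have h2 : ‖z‖ - ‖z'‖ ≥ -‖z - z'‖ := by
          have := neg_abs_le (‖z‖ - ‖z'‖); linarith
        have h3 : ‖z‖ - ‖z'‖ ≤ ‖z - z'‖ := (le_abs_self _).trans h1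
        unfold rho
        nlinarith [norm_nonneg z, norm_nonneg z',
          mul_nonneg (by linarith : (0:ℝ) ≤ ‖z - z'‖ - (‖z‖ - ‖z'‖))
            (by positivity : (0:ℝ) ≤ ‖z‖ + ‖z'‖)]
      have hble : b ≤ a + s := by
        nlinarith [sq_nonneg (a + s - b)]
      -- now ‖z - z'‖ < 2r(a + s), hence s² < 2ra + 2rs, hence s² < 4r² + 4ra
      nlinarith [sq_nonneg (s - 2*r), mul_nonneg hr.le ha0, mul_pos hr hr,
        mul_nonneg hr.le hb0, mul_pos hr hs0]
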